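/- Let U_1, ..., U_d be d×d unitary matrices with Tr(U_j* U_i) = 0 for all i ≠ j, and suppose there exist a positive integer r and a d×r complex matrix W with W W* = I_d such that for all i ≠ j every diagonal entry of W* U_j* U_i W is zero. Let S be the linear span of {U_j* U_i : 1 ≤ i, j ≤ d}. If dim S = d, then S is closed under matrix multiplication (hence, being also closed under conjugate transpose and containing the identity, is a C*-algebra) and S has a separating vector. -/

import Mathlib

open Matrix

theorem stmt11 (d r : ℕ) (hr : 0 < r) (U : Fin d → Matrix (Fin d) (Fin d) ℂ)
    (hU : ∀ i, U i ∈ Matrix.unitaryGroup (Fin d) ℂ)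
    (horth : ∀ (i j : Fin d), i ≠ j → Matrix.trace ((U j)ᴴ * U i) = 0)
    (W : Matrix (Fin d) (Fin r) ℂ) (hWW : W * Wᴴ = 1)
    (hW : ∀ (i j : Fin d), i ≠ j → ∀ k : Fin r, (Wᴴ * (U j)ᴴ * U i * W) k k = 0)
    (S : Submodule ℂ (Matrix (Fin d) (Fin d) ℂ))
    (hS : S = Submodule.span ℂ {X | ∃ i j : Fin d, X = (U j)ᴴ * U i})
    (hdim : Module.finrank ℂ S = d) :
    (∀ A ∈ S, ∀ B ∈ S, A * B ∈ S) ∧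
    (∃ ψ : Fin d → ℂ, ∀ A ∈ S, A ≠ 0 → A.mulVec ψ ≠ 0) := by
  rcases Nat.eq_zero_or_pos d with hd | hd
  · subst hd
    refine ⟨fun A hA B hB => ?_, ⟨0, fun A hA h0 => absurd (Subsingleton.elim A 0) h0⟩⟩
    have h : A * B = 0 := Subsingleton.elim _ _
    rw [h]; exact S.zero_mem
  · have i₀ : Fin d := ⟨0, hd⟩
    have hUr : ∀ l, U l * (U l)ᴴ = 1 := by
      intro l
      simpa [Matrix.star_eq_conjTranspose] using (Matrix.mem_unitaryGroup_iff.mp (hU l))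
    have hUl : ∀ l, (U l)ᴴ * U l = 1 := by
      intro l
      simpa [Matrix.star_eq_conjTranspose] using (Matrix.mem_unitaryGroup_iff'.mp (hU l))
    have hprod : ∀ j i k, ((U j)ᴴ * U i) * ((U i)ᴴ * U k) = (U j)ᴴ * U k := by
      intro j i k
      rw [mul_assoc, ← mul_assoc (U i), hUr, one_mul]
    -- linear independence of each family i ↦ (U l)ᴴ * U i
    have hli : ∀ l : Fin d, LinearIndependent ℂ (fun i : Fin d => (U l)ᴴ * U i) := by
      intro l
      rw [Fintype.linearIndependent_iff]
      intro c hc m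
      have h1 : trace (((U m)ᴴ * U l) * ∑ i, c i • ((U l)ᴴ * U i)) = 0 := by
        rw [hc, mul_zero, trace_zero]
      rw [Finset.mul_sum] at h1
      have h2 : ∀ i ∈ Finset.univ, ((U m)ᴴ * U l) * (c i • ((U l)ᴴ * U i)) =
          c i • ((U m)ᴴ * U i) := by
        intro i _
        rw [mul_smul_comm, hprod]
      rw [Finset.sum_congr rfl h2, trace_sum] at h1
      have h3 : ∀ i ∈ Finset.univ, i ≠ m → trace (c i • ((U m)ᴴ * U i)) = 0 := by
        intro i _ him
        rw [trace_smul, horth i m him, smul_zero]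
      rw [Finset.sum_eq_single_of_mem m (Finset.mem_univ m) h3, hUl m, trace_smul,
        trace_one] at h1
      have hd0 : (d : ℂ) ≠ 0 := Nat.cast_ne_zero.mpr hd.ne'
      simpa [Fintype.card_fin, hd0] using h1
    -- each family spans S
    have hspan : ∀ l : Fin d,
        S = Submodule.span ℂ (Set.range fun i : Fin d => (U l)ᴴ * U i) := by
      intro l
      symm
      apply Submodule.eq_of_le_of_finrank_le
      · rw [hS]
        apply Submodule.span_mono
        rintro _ ⟨i, rfl⟩
        exact ⟨i, l, rfl⟩
      · rw [hdim, finrank_span_eq_card (hli l), Fintype.card_fin]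
    have hgen : ∀ i j : Fin d, (U j)ᴴ * U i ∈ S := by
      intro i j
      rw [hS]
      exact Submodule.subset_span ⟨i, j, rfl⟩
    constructor
    · -- closure under multiplication
      intro A hA B hB
      rw [hspan i₀, Submodule.mem_span_range_iff_exists_fun] at hA
      obtain ⟨a, ha⟩ := hA
      rw [← ha, Finset.sum_mul]
      apply Submodule.sum_mem
      intro i _
      rw [smul_mul_assoc]
      apply Submodule.smul_mem
      have hBi := hB
      rw [hspan i, Submodule.mem_span_range_iff_exists_fun] at hBi
      obtain ⟨b, hb⟩ := hBi
      rw [← hb, Finset.mul_sum]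
      apply Submodule.sum_mem
      intro m _
      rw [mul_smul_comm, hprod]
      exact Submodule.smul_mem _ _ (hgen m i₀)
    · -- separating vector
      have hWne : ∃ k : Fin r, ∃ a : Fin d, W a k ≠ 0 := by
        by_contra h
        push_neg at h
        have hW0 : W = 0 := by
          ext a k
          exact h k a
        rw [hW0] at hWW
        have h1 : ((0 : Matrix (Fin d) (Fin r) ℂ) * (0 : Matrix (Fin d) (Fin r) ℂ)ᴴ) i₀ i₀
            = (1 : Matrix (Fin d) (Fin d) ℂ) i₀ i₀ := by rw [hWW]
        simp [Matrix.one_apply_eq] at h1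
      obtain ⟨k, a0, ha0⟩ := hWne
      refine ⟨fun a => W a k, ?_⟩
      intro A hA hAne hzero
      apply hAne
      rw [hspan i₀, Submodule.mem_span_range_iff_exists_fun] at hA
      obtain ⟨c, hc⟩ := hA
      have hUA : U i₀ * A = ∑ i, c i • U i := by
        rw [← hc, Finset.mul_sum]
        apply Finset.sum_congr rfl
        intro i _
        rw [mul_smul_comm, ← mul_assoc, hUr, one_mul]
      have hpoint : ∀ a, ∑ i, c i * (U i * W) a k = 0 := by
        intro a
        have h1 : (U i₀ * A).mulVec (fun b => W b k) a = 0 := by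
          rw [← Matrix.mulVec_mulVec, hzero, Matrix.mulVec_zero]
          rfl
        rw [hUA] at h1
        rw [← h1]
        simp only [Matrix.mulVec, dotProduct, Matrix.sum_apply, Matrix.smul_apply,
          Finset.sum_mul, Matrix.mul_apply, Finset.mul_sum, smul_eq_mul]
        rw [Finset.sum_comm]
        apply Finset.sum_congr rfl
        intro b _
        apply Finset.sum_congr rfl
        intro i _
        ring
      have entry : ∀ m i : Fin d, (Wᴴ * (U m)ᴴ * U i * W) k k =
          ∑ a, (starRingEnd ℂ) ((U m * W) a k) * ((U i * W) a k) := by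
        intro m i
        have h : Wᴴ * (U m)ᴴ * U i * W = (U m * W)ᴴ * (U i * W) := by
          rw [Matrix.conjTranspose_mul, Matrix.mul_assoc]
        rw [h, Matrix.mul_apply]
        simp [Matrix.conjTranspose_apply]
      have hnrm : ∑ a, (starRingEnd ℂ) (W a k) * W a k ≠ 0 := by
        have heq : ∑ a, (starRingEnd ℂ) (W a k) * W a k
            = ((∑ a, Complex.normSq (W a k) : ℝ) : ℂ) := by
          push_cast
          apply Finset.sum_congr rfl
          intro a _
          rw [← Complex.normSq_eq_conj_mul_self]
        have hpos : 0 < ∑ a, Complex.normSq (W a k) :=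
          Finset.sum_pos' (fun a _ => Complex.normSq_nonneg _)
            ⟨a0, Finset.mem_univ a0, Complex.normSq_pos.mpr ha0⟩
        rw [heq]
        exact_mod_cast hpos.ne'
      have hEdiag : ∀ m : Fin d,
          ∑ a, (starRingEnd ℂ) ((U m * W) a k) * ((U m * W) a k)
            = ∑ a, (starRingEnd ℂ) (W a k) * W a k := by
        intro m
        rw [← entry m m]
        have h : Wᴴ * (U m)ᴴ * U m * W = Wᴴ * W := by
          rw [Matrix.mul_assoc Wᴴ, hUl m, Matrix.mul_one]
        rw [h, Matrix.mul_apply]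
        simp [Matrix.conjTranspose_apply]
      have hcm : ∀ m, c m = 0 := by
        intro m
        have hswap : ∑ i, c i *
            (∑ a, (starRingEnd ℂ) ((U m * W) a k) * ((U i * W) a k)) = 0 := by
          simp_rw [Finset.mul_sum]
          rw [Finset.sum_comm]
          apply Finset.sum_eq_zero
          intro a _
          have hpa := hpoint a
          calc ∑ i, c i * ((starRingEnd ℂ) ((U m * W) a k) * ((U i * W) a k))
              = (starRingEnd ℂ) ((U m * W) a k) * ∑ i, c i * (U i * W) a k := by
                rw [Finset.mul_sum]
                apply Finset.sum_congr rfl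
                intro i _
                ring
            _ = 0 := by rw [hpa, mul_zero]
        have hsingle : ∑ i, c i *
            (∑ a, (starRingEnd ℂ) ((U m * W) a k) * ((U i * W) a k))
            = c m * (∑ a, (starRingEnd ℂ) (W a k) * W a k) := by
          rw [Finset.sum_eq_single_of_mem m (Finset.mem_univ m)
            (fun i _ him => by rw [← entry m i, hW i m him, mul_zero]), hEdiag m]
        rw [hsingle] at hswap
        exact (mul_eq_zero.mp hswap).resolve_right hnrm
      rw [← hc]
      apply Finset.sum_eq_zero
      intro i _
      rw [hcm i, zero_smul]
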